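/- Let 0 < p < ∞, 1 ≤ s < ∞ and -n < α < ∞. Then the continuous compactly supported functions C_c⁰(ℝⁿ) are dense in BL^{p,s}_{|x|^α}(ℝⁿ) with respect to its quasinorm. -/

import Mathlib

open MeasureTheory Metric ENNReal Filter
open scoped ENNReal NNReal

noncomputable section

abbrev Rn (n : ℕ) := EuclideanSpace ℝ (Fin n)

/-- A `(p,s,α)`-block: supported in a closed ball `B(x₀,r)` with
`‖a‖_{L^s} ≤ |B|^{-α/(pn)-1/p+1/s}` (with `1/s = 0` when `s = ∞`). -/
def IsBlock (n : ℕ) (p : ℝ) (s : ℝ≥0∞) (α : ℝ) (a : Rn n → ℝ) : Prop :=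
  Measurable a ∧
  ∃ x₀ : Rn n, ∃ r : ℝ, 0 < r ∧ (∀ x, x ∉ closedBall x₀ r → a x = 0) ∧
    eLpNorm a s volume ≤
      ENNReal.ofReal ((volume (closedBall x₀ r)).toReal ^ (-α / (p * n) - 1 / p + s.toReal⁻¹))

/-- A decomposition `f = Σ l k • a k` (a.e. convergence) into `(p,s,α)`-blocks with
`Σ |l k| ^ min p 1 < ∞`. -/
def IsBLDecomp (n : ℕ) (p : ℝ) (s : ℝ≥0∞) (α : ℝ)
    (f : Rn n → ℝ) (l : ℕ → ℝ) (a : ℕ → Rn n → ℝ) : Prop :=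
  (∀ k, IsBlock n p s α (a k)) ∧ Summable (fun k => |l k| ^ min p 1) ∧
  (∀ᵐ x : Rn n ∂volume, HasSum (fun k => l k * a k x) (f x))

/-- Membership in the block space `BL^{p,s}_{|x|^α}`. -/
def MemBL (n : ℕ) (p : ℝ) (s : ℝ≥0∞) (α : ℝ) (f : Rn n → ℝ) : Prop :=
  ∃ l a, IsBLDecomp n p s α f l a

/-- The quasinorm of `BL^{p,s}_{|x|^α}`:
`inf (Σ |l k| ^ min p 1)^(1/min p 1)` over all block decompositions. -/
def BLnorm (n : ℕ) (p : ℝ) (s : ℝ≥0∞) (α : ℝ) (f : Rn n → ℝ) : ℝ :=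
  sInf { c | ∃ l a, IsBLDecomp n p s α f l a ∧
    c = (∑' k, |l k| ^ min p 1) ^ (min p 1)⁻¹ }

lemma hasCompactSupport_finset_sum {α ι : Type*} [TopologicalSpace α]
    (s : Finset ι) (F : ι → α → ℝ) :
    (∀ i ∈ s, HasCompactSupport (F i)) →
    HasCompactSupport (fun x => ∑ i ∈ s, F i x) := by
  classical
  induction s using Finset.induction_on with
  | empty =>
      intro _
      simp only [Finset.sum_empty]
      exact HasCompactSupport.zero
  | @insert a s ha ih =>
      intro h
      have heq : (fun x => ∑ i ∈ insert a s, F i x)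
          = F a + fun x => ∑ i ∈ s, F i x := by
        funext x; simp [Finset.sum_insert ha]
      rw [heq]
      exact (h a (Finset.mem_insert_self a s)).add
        (ih fun i hi => h i (Finset.mem_insert_of_mem hi))

set_option maxHeartbeats 1000000 in
/-- for `0 < p < ∞`, `1 ≤ s < ∞`, `-n < α`, the continuous compactly
supported functions are dense in `BL^{p,s}_{|x|^α}`. -/
theorem continuous_compactSupport_dense_BL (n : ℕ) (hn : 0 < n) (p : ℝ) (s : ℝ≥0∞) (α : ℝ)
    (hp : 0 < p) (hs1 : 1 ≤ s) (hs2 : s ≠ ∞) (hα : -(n : ℝ) < α) :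
    ∀ f : Rn n → ℝ, MemBL n p s α f → ∀ ε : ℝ, 0 < ε →
      ∃ g : Rn n → ℝ, Continuous g ∧ HasCompactSupport g ∧
        MemBL n p s α (fun x => f x - g x) ∧
        BLnorm n p s α (fun x => f x - g x) < ε := by
  classical
  rintro f ⟨l, a, hblock, hsum, hae⟩ ε hε
  set m : ℝ := min p 1 with hm
  have hm0 : 0 < m := lt_min hp one_pos
  have hεm : 0 < ε ^ m := Real.rpow_pos_of_pos hε m
  -- choose the cut point N for the tail
  obtain ⟨N, hN⟩ : ∃ N, ∑' k, |l (k + N)| ^ m < ε ^ m / 2 := by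
    have ht := _root_.tendsto_sum_nat_add (fun k => |l k| ^ m)
    exact (ht.eventually (gt_mem_nhds (by positivity : (0:ℝ) < ε ^ m / 2))).exists
  -- unpack the block data
  simp only [IsBlock] at hblock
  choose ameas x₀ r hr hsupp hnorm using hblock
  -- constants
  set C : ℕ → ℝ := fun k =>
    (volume (closedBall (x₀ k) (r k + 1))).toReal ^ (-α / (p * n) - 1 / p + s.toReal⁻¹)
    with hCdef
  have hC : ∀ k, 0 < C k := by
    intro k
    apply Real.rpow_pos_of_pos
    exact ENNReal.toReal_pos (measure_closedBall_pos volume _ (by linarith [hr k])).ne'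
      (measure_closedBall_lt_top).ne
  set θ : ℝ := (ε ^ m / (2 * (N + 1))) ^ m⁻¹ with hθdef
  have hθpos : 0 < θ := by
    apply Real.rpow_pos_of_pos
    positivity
  have hθm : θ ^ m = ε ^ m / (2 * (N + 1)) :=
    Real.rpow_inv_rpow (by positivity) hm0.ne'
  set η : ℕ → ℝ := fun k => C k * θ / (|l k| + 1) with hηdef
  have hη : ∀ k, 0 < η k := by
    intro k
    have := hC k
    have := abs_nonneg (l k)
    positivity
  -- continuous compactly supported approximations of the blocks
  have happrox : ∀ k, ∃ g : Rn n → ℝ, HasCompactSupport g ∧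
      eLpNorm (a k - g) s volume ≤ ENNReal.ofReal (η k) ∧ Continuous g := by
    intro k
    have hmem : MemLp (a k) s volume :=
      ⟨(ameas k).aestronglyMeasurable, lt_of_le_of_lt (hnorm k) ENNReal.ofReal_lt_top⟩
    obtain ⟨g, hg1, hg2, hg3, -⟩ :=
      hmem.exists_hasCompactSupport_eLpNorm_sub_le hs2
        (ε := ENNReal.ofReal (η k)) (ENNReal.ofReal_pos.mpr (hη k)).ne'
    exact ⟨g, hg1, hg2, hg3⟩
  choose g₀ hg₀supp hg₀cl hg₀cont using happrox
  -- cutoff functions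
  set χ : ℕ → Rn n → ℝ := fun k x => max 0 (min 1 (r k + 1 - dist x (x₀ k))) with hχdef
  have hχcont : ∀ k, Continuous (χ k) := fun k =>
    continuous_const.max (continuous_const.min
      (continuous_const.sub (continuous_id.dist continuous_const)))
  have hχ0le : ∀ k x, 0 ≤ χ k x := fun k x => le_max_left _ _
  have hχle1 : ∀ k x, χ k x ≤ 1 := fun k x => max_le zero_le_one (min_le_left _ _)
  have hχ1 : ∀ k x, x ∈ closedBall (x₀ k) (r k) → χ k x = 1 := by
    intro k x hx
    rw [mem_closedBall] at hx
    have h1 : (1:ℝ) ≤ r k + 1 - dist x (x₀ k) := by linarith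
    simp only [hχdef]
    rw [min_eq_left h1, max_eq_right zero_le_one]
  have hχ0 : ∀ k x, x ∉ closedBall (x₀ k) (r k + 1) → χ k x = 0 := by
    intro k x hx
    rw [mem_closedBall, not_le] at hx
    have h1 : r k + 1 - dist x (x₀ k) ≤ 0 := by linarith
    simp only [hχdef]
    rw [max_eq_left ((min_le_right _ _).trans h1)]
  -- pointwise identity for the error
  have hdiff : ∀ k x, a k x - χ k x * g₀ k x = χ k x * (a k x - g₀ k x) := by
    intro k x
    by_cases hx : x ∈ closedBall (x₀ k) (r k)
    · rw [hχ1 k x hx]; ring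
    · rw [hsupp k x hx]; ring
  -- L^s bound for the error
  have hbnorm : ∀ k, eLpNorm (fun x => a k x - χ k x * g₀ k x) s volume
      ≤ ENNReal.ofReal (η k) := by
    intro k
    have h1 : (fun x => a k x - χ k x * g₀ k x)
        = fun x => χ k x * (a k x - g₀ k x) := funext (hdiff k)
    rw [h1]
    refine le_trans (eLpNorm_mono (g := a k - g₀ k) fun x => ?_) (hg₀cl k)
    show ‖χ k x * (a k x - g₀ k x)‖ ≤ ‖a k x - g₀ k x‖
    rw [Real.norm_eq_abs, Real.norm_eq_abs, abs_mul]
    exact mul_le_of_le_one_left (abs_nonneg _)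
      (by rw [abs_of_nonneg (hχ0le k x)]; exact hχle1 k x)
  -- new coefficients and blocks
  set L : ℕ → ℝ := fun k => if k < N then l k * (η k / C k) else l k with hLdef
  set A : ℕ → Rn n → ℝ := fun k =>
    if k < N then (fun x => (C k / η k) * (a k x - χ k x * g₀ k x)) else a k with hAdef
  set G : Rn n → ℝ := fun x => ∑ k ∈ Finset.range N, l k * (χ k x * g₀ k x) with hGdef
  -- every A k is a block
  have hA : ∀ k, IsBlock n p s α (A k) := by
    intro k
    by_cases hk : k < N
    · simp only [hAdef, if_pos hk]
      refine ⟨measurable_const.mul ((ameas k).sub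
        ((hχcont k).mul (hg₀cont k)).measurable), x₀ k, r k + 1, by linarith [hr k],
        ?_, ?_⟩
      · intro x hx
        have ha0 : a k x = 0 := hsupp k x fun hmem =>
          hx (closedBall_subset_closedBall (by linarith) hmem)
        show (C k / η k) * (a k x - χ k x * g₀ k x) = 0
        rw [ha0, hχ0 k x hx]; ring
      · have hsm : (fun x => (C k / η k) * (a k x - χ k x * g₀ k x))
            = (C k / η k) • (fun x => a k x - χ k x * g₀ k x) := rfl
        rw [hsm, eLpNorm_const_smul]
        have hc0 : (0:ℝ) ≤ C k / η k := by positivity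
        calc (‖C k / η k‖₊ : ℝ≥0∞) * eLpNorm (fun x => a k x - χ k x * g₀ k x) s volume
            ≤ ENNReal.ofReal (C k / η k) * ENNReal.ofReal (η k) := by
              rw [show (‖C k / η k‖₊ : ℝ≥0∞) = ENNReal.ofReal (C k / η k) from Real.enorm_eq_ofReal hc0]
              exact mul_le_mul_right (hbnorm k) _
          _ = ENNReal.ofReal (C k / η k * η k) := (ENNReal.ofReal_mul hc0).symm
          _ = ENNReal.ofReal (C k) := by rw [div_mul_cancel₀ _ (hη k).ne']
    · simp only [hAdef, if_neg hk]
      exact ⟨ameas k, x₀ k, r k, hr k, hsupp k, hnorm k⟩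
  -- summability of the new coefficients
  have hLtail : ∀ k, |L (k + N)| ^ m = |l (k + N)| ^ m := by
    intro k
    simp only [hLdef, if_neg (Nat.not_lt.mpr (Nat.le_add_left N k))]
  have hLs : Summable fun k => |L k| ^ m := by
    apply (summable_nat_add_iff N).mp
    have : (fun k => |L (k + N)| ^ m) = fun k => |l (k + N)| ^ m := funext hLtail
    rw [this]
    exact (summable_nat_add_iff N).mpr hsum
  -- a.e. decomposition of f - G
  have haeh : ∀ᵐ x : Rn n ∂volume, HasSum (fun k => L k * A k x) (f x - G x) := by
    filter_upwards [hae] with x hx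
    have h2 : HasSum (fun k => if k < N then l k * (χ k x * g₀ k x) else 0) (G x) := by
      have h2' := hasSum_sum_of_ne_finset_zero (L := SummationFilter.unconditional ℕ) (s := Finset.range N)
        (f := fun k => if k < N then l k * (χ k x * g₀ k x) else 0)
        (fun k hk => if_neg fun h => hk (Finset.mem_range.mpr h))
      have heq : (∑ k ∈ Finset.range N,
          if k < N then l k * (χ k x * g₀ k x) else 0) = G x :=
        Finset.sum_congr rfl fun k hk => if_pos (Finset.mem_range.mp hk)
      rwa [heq] at h2'
    have h3 := hx.sub h2
    convert h3 using 1
    · rfl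
    funext k
    by_cases hk : k < N
    · simp only [hLdef, hAdef, if_pos hk]
      have h4 := (hη k).ne'
      have h5 := (hC k).ne'
      field_simp
    · simp only [hLdef, hAdef, if_neg hk, sub_zero]
  -- the head coefficients are small
  have hhead : ∀ k, k < N → |L k| ^ m ≤ θ ^ m := by
    intro k hk
    refine Real.rpow_le_rpow (abs_nonneg _) ?_ hm0.le
    have habs : |L k| = |l k| * (η k / C k) := by
      rw [hLdef]
      simp only [if_pos hk]
      rw [abs_mul, abs_of_pos (div_pos (hη k) (hC k))]
    have hre : η k / C k = θ / (|l k| + 1) := by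
      rw [hηdef]
      have h5 := (hC k).ne'
      have h6 : |l k| + 1 ≠ 0 := by positivity
      field_simp
    rw [habs, hre, mul_div_assoc', div_le_iff₀ (by positivity : (0:ℝ) < |l k| + 1)]
    nlinarith [abs_nonneg (l k), hθpos]
  -- total bound on the sum
  have htot : ∑' k, |L k| ^ m < ε ^ m := by
    rw [← Summable.sum_add_tsum_nat_add N hLs]
    have h1 : ∑ k ∈ Finset.range N, |L k| ^ m ≤ (N:ℝ) * θ ^ m := by
      calc ∑ k ∈ Finset.range N, |L k| ^ m
          ≤ ∑ _k ∈ Finset.range N, θ ^ m :=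
            Finset.sum_le_sum fun k hk => hhead k (Finset.mem_range.mp hk)
        _ = (N:ℝ) * θ ^ m := by
            rw [Finset.sum_const, Finset.card_range, nsmul_eq_mul]
    have h2 : (∑' k, |L (k + N)| ^ m) < ε ^ m / 2 := by
      have : (fun k => |L (k + N)| ^ m) = fun k => |l (k + N)| ^ m := funext hLtail
      rw [this]; exact hN
    have h3 : (N:ℝ) * θ ^ m ≤ ε ^ m / 2 := by
      rw [hθm, mul_div_assoc', div_le_div_iff₀ (by positivity) (by norm_num)]
      nlinarith [hεm.le, Nat.cast_nonneg (α := ℝ) N]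
    linarith
  -- conclude
  have hGcont : Continuous G := continuous_finset_sum _ fun k _ =>
    continuous_const.mul ((hχcont k).mul (hg₀cont k))
  have hGsupp : HasCompactSupport G := by
    apply hasCompactSupport_finset_sum
    intro k _
    apply HasCompactSupport.intro (isCompact_closedBall (x₀ k) (r k + 1))
    intro x hx
    rw [hχ0 k x hx]; ring
  have hdecomp : IsBLDecomp n p s α (fun x => f x - G x) L A := ⟨hA, hLs, haeh⟩
  refine ⟨G, hGcont, hGsupp, ⟨L, A, hdecomp⟩, ?_⟩
  have hmemset : ((∑' k, |L k| ^ m) ^ m⁻¹) ∈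
      { c | ∃ l' a', IsBLDecomp n p s α (fun x => f x - G x) l' a' ∧
        c = (∑' k, |l' k| ^ min p 1) ^ (min p 1)⁻¹ } := ⟨L, A, hdecomp, rfl⟩
  have hbdd : BddBelow { c | ∃ l' a', IsBLDecomp n p s α (fun x => f x - G x) l' a' ∧
      c = (∑' k, |l' k| ^ min p 1) ^ (min p 1)⁻¹ } := by
    refine ⟨0, fun c hc => ?_⟩
    obtain ⟨l', a', -, rfl⟩ := hc
    exact Real.rpow_nonneg (tsum_nonneg fun k => Real.rpow_nonneg (abs_nonneg _) _) _
  have hle : BLnorm n p s α (fun x => f x - G x) ≤ (∑' k, |L k| ^ m) ^ m⁻¹ :=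
    csInf_le hbdd hmemset
  have hfin : (∑' k, |L k| ^ m) ^ m⁻¹ < ε := by
    have h := Real.rpow_lt_rpow
      (tsum_nonneg fun k => Real.rpow_nonneg (abs_nonneg _) _) htot (inv_pos.mpr hm0)
    rwa [Real.rpow_rpow_inv hε.le hm0.ne'] at h
  exact lt_of_le_of_lt hle hfin
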